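/- Let (A, ⊠, I) be a monoidal abelian category whose monoidal product preserves reflexive coequalizers, V an object, A ↪ W a subobject with cokernel π : W → W/A. Then the kernel of V ⊠ π : V ⊠ W → V ⊠ (W/A) equals the image of the composite V ⊠ (A̲ ⊕ W) ↪ V ⊠ (A ⊕ W) → V ⊠ W induced by V ⊠ (ι_A + id_W). -/
import Mathlib


open CategoryTheory Limits MonoidalCategory

/-- A functor preserves reflexive coequalizers if it preserves coequalizers of
every reflexive pair. -/
def PreservesReflexiveCoequalizersFun {𝒜 : Type*} [Category 𝒜] {ℬ : Type*} [Category ℬ]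
    (Γ : 𝒜 ⥤ ℬ) : Prop :=
  ∀ ⦃X Y : 𝒜⦄ (d₀ d₁ : X ⟶ Y), IsReflexivePair d₀ d₁ →
    PreservesColimit (parallelPair d₀ d₁) Γ

/-- if the monoidal product preserves reflexive coequalizers, then
for a subobject `ι : A ↪ W` with quotient `π : W ⟶ W/A`, the kernel of
`V ⊠ π` coincides with the image of the composite
`V ⊠ (A̲ ⊕ W) ↪ V ⊠ (A ⊕ W) ⟶ V ⊠ W` induced by `V ⊠ (ι + id_W)`,
where `V ⊠ (A̲ ⊕ W) = ker (V ⊠ π_W)` is the multilinear part. -/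
theorem statement7 {𝒜 : Type*} [Category 𝒜] [Abelian 𝒜] [MonoidalCategory 𝒜]
    (hL : ∀ X : 𝒜, PreservesReflexiveCoequalizersFun (tensorLeft X))
    (hR : ∀ X : 𝒜, PreservesReflexiveCoequalizersFun (tensorRight X))
    (V : 𝒜) {A W : 𝒜} (ι : A ⟶ W) [Mono ι] :
    kernelSubobject (V ◁ cokernel.π ι) =
      imageSubobject
        (kernel.ι (V ◁ (biprod.snd : A ⊞ W ⟶ W)) ≫ (V ◁ biprod.desc ι (𝟙 W))) := by
  set d₀ : A ⊞ W ⟶ W := biprod.desc ι (𝟙 W) with hd₀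
  set d₁ : A ⊞ W ⟶ W := biprod.snd with hd₁
  have hrefl : IsReflexivePair d₀ d₁ :=
    ⟨⟨biprod.inr, by simp [hd₀], by simp [hd₁]⟩⟩
  have hπ : d₀ ≫ cokernel.π ι = d₁ ≫ cokernel.π ι := by
    apply biprod.hom_ext' <;> simp [hd₀, hd₁]
  -- `cokernel.π ι` is the coequalizer of the reflexive pair `(d₀, d₁)`
  have hcolim : IsColimit (Cofork.ofπ (cokernel.π ι) hπ) :=
    Cofork.IsColimit.mk' _ fun s => by
      have hs : ι ≫ s.π = 0 := by
        have h1 := s.condition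
        have h2 : biprod.inl ≫ d₀ ≫ s.π = biprod.inl ≫ d₁ ≫ s.π := by rw [h1]
        simpa [hd₀, hd₁] using h2
      refine ⟨cokernel.desc ι s.π hs, by simp, fun {m} hm => ?_⟩
      rw [← cancel_epi (cokernel.π ι)]
      simpa using hm
  haveI := hL V d₀ d₁ hrefl
  -- whisker the coequalizer
  have hcolim' :
      IsColimit
        (Cofork.ofπ ((tensorLeft V).map (cokernel.π ι))
          (by simp only [← (tensorLeft V).map_comp, hπ]) :
          Cofork ((tensorLeft V).map d₀) ((tensorLeft V).map d₁)) :=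
    isColimitCoforkMapOfIsColimit (tensorLeft V) hπ hcolim
  -- hence `V ◁ cokernel.π ι` is a cokernel of `V ◁ d₀ - V ◁ d₁`
  set f : V ⊗ (A ⊞ W) ⟶ V ⊗ W := V ◁ d₀ - V ◁ d₁ with hf
  have hw : f ≫ (V ◁ cokernel.π ι) = 0 := by
    rw [hf, Preadditive.sub_comp, ← MonoidalCategory.whiskerLeft_comp,
      ← MonoidalCategory.whiskerLeft_comp, hπ, sub_self]
  have hcoker : IsColimit (CokernelCofork.ofπ (V ◁ cokernel.π ι) hw) := by
    have := CategoryTheory.Preadditive.isColimitCokernelCoforkOfCofork hcolim'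
    rw [CategoryTheory.Preadditive.cokernelCoforkOfCofork_ofπ] at this
    exact this
  -- exactness gives the kernel subobject as an image subobject
  have hexact : (ShortComplex.mk f (V ◁ cokernel.π ι) hw).Exact :=
    ShortComplex.exact_of_g_is_cokernel _ hcoker
  have h1 : imageSubobject f = kernelSubobject (V ◁ cokernel.π ι) :=
    (ShortComplex.exact_iff_image_eq_kernel _).1 hexact
  rw [← h1]
  -- now compare the two image subobjects
  set k : kernel (V ◁ d₁) ⟶ V ⊗ (A ⊞ W) := kernel.ι (V ◁ d₁) with hk
  have hkf : k ≫ f = k ≫ (V ◁ d₀) := by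
    rw [hf, Preadditive.comp_sub, kernel.condition, sub_zero]
  -- the retraction onto the kernel of `V ◁ d₁`
  have hsec : (V ◁ biprod.inr) ≫ (V ◁ d₁) = 𝟙 (V ⊗ W) := by
    rw [← MonoidalCategory.whiskerLeft_comp]
    simp [hd₁]
  have he : (𝟙 (V ⊗ (A ⊞ W)) - (V ◁ d₁) ≫ (V ◁ biprod.inr)) ≫ (V ◁ d₁) = 0 := by
    rw [Preadditive.sub_comp, Category.id_comp, Category.assoc, hsec, Category.comp_id,
      sub_self]
  set r : V ⊗ (A ⊞ W) ⟶ kernel (V ◁ d₁) := kernel.lift (V ◁ d₁) _ he with hr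
  have hrk : r ≫ k = 𝟙 (V ⊗ (A ⊞ W)) - (V ◁ d₁) ≫ (V ◁ biprod.inr) := by
    simp [hr, hk]
  have hsec₀ : (V ◁ biprod.inr) ≫ (V ◁ d₀) = 𝟙 (V ⊗ W) := by
    rw [← MonoidalCategory.whiskerLeft_comp]
    simp [hd₀]
  have hef : ((V ◁ d₁) ≫ (V ◁ biprod.inr)) ≫ f = 0 := by
    rw [hf, Category.assoc, Preadditive.comp_sub, hsec₀, hsec, sub_self, comp_zero]
  have hff : f = r ≫ (k ≫ (V ◁ d₀)) := by
    rw [← hkf, ← Category.assoc, hrk, Preadditive.sub_comp, Category.id_comp, hef, sub_zero]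
  refine le_antisymm ?_ ?_
  · rw [hff]
    exact imageSubobject_comp_le r (k ≫ (V ◁ d₀))
  · rw [← hkf]
    exact imageSubobject_comp_le k f
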